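/- Consider the S2GD algorithm with parameters 0 ≤ ν ≤ μ, 0 < h < 1/(2L), and integer m ≥ 1 such that c := (1 − νh)^m/(β μ h (1 − 2Lh)) + 2(L − μ)h/(1 − 2Lh) < 1, where β = Σ_{t=1}^m (1 − νh)^{m−t}. Then for every epoch index j ≥ 0, the iterates satisfy E[f(x_j) − f(x*)] ≤ c^j (f(x_0) − f(x*)). -/

import Mathlib

open MeasureTheory ProbabilityTheory
open scoped RealInnerProductSpace BigOperators

section OneStep
variable {E : Type*} [NormedAddCommGroup E] [InnerProductSpace ℝ E] [CompleteSpace E]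

lemma s2gd_expand (a q : E) (h : ℝ) :
    ‖a - h • q‖ ^ 2 = ‖a‖ ^ 2 - 2 * h * ⟪q, a⟫ + h ^ 2 * ‖q‖ ^ 2 := by
  have := @norm_sub_sq_real E _ _ a (h • q)
  rw [real_inner_smul_right, norm_smul] at this
  rw [this, real_inner_comm]
  rw [mul_pow]
  ring_nf
  rw [Real.norm_eq_abs, sq_abs]

lemma s2gd_two_sq (u v : E) : ‖u + v‖ ^ 2 ≤ 2 * ‖u‖ ^ 2 + 2 * ‖v‖ ^ 2 := by
  have h1 := @norm_add_sq_real E _ _ u v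
  have h2 := abs_real_inner_le_norm u v
  have h3 := abs_le.mp h2
  nlinarith [sq_nonneg (‖u‖ - ‖v‖)]

lemma s2gd_lemA {L : ℝ} (hL : 0 < L) (g : E → ℝ) (Gg : E → E)
    (hconv : ∀ x z : E, g x + ⟪Gg x, z - x⟫ ≤ g z)
    (hsmooth : ∀ x z : E, g z ≤ g x + ⟪Gg x, z - x⟫ + L / 2 * ‖z - x‖ ^ 2)
    (u v : E) : ‖Gg u - Gg v‖ ^ 2 ≤ 2 * L * (g u - g v - ⟪Gg v, u - v⟫) := by
  set a := Gg u with ha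
  set b := Gg v with hb
  set z := u - L⁻¹ • (a - b) with hz
  have h1 := hconv v z
  have h2 := hsmooth u z
  have hzu : z - u = -(L⁻¹ • (a - b)) := by rw [hz]; abel
  have hzv : z - v = (u - v) - L⁻¹ • (a - b) := by rw [hz]; abel
  have e1 : ⟪a, z - u⟫ = -(L⁻¹ * ⟪a, a - b⟫) := by
    rw [hzu, inner_neg_right, real_inner_smul_right]
  have e2 : ‖z - u‖ ^ 2 = L⁻¹ ^ 2 * ‖a - b‖ ^ 2 := by
    rw [hzu, norm_neg, norm_smul, mul_pow]; simp [sq_abs]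
  have e3 : ⟪b, z - v⟫ = ⟪b, u - v⟫ - L⁻¹ * ⟪b, a - b⟫ := by
    rw [hzv, inner_sub_right, real_inner_smul_right]
  have e4 : ⟪a, a - b⟫ - ⟪b, a - b⟫ = ‖a - b‖ ^ 2 := by
    rw [← inner_sub_left, real_inner_self_eq_norm_sq]
  have hLne : (L : ℝ) ≠ 0 := ne_of_gt hL
  have hinv : 0 < L⁻¹ := by positivity
  rw [e1, e2] at h2
  rw [e3] at h1
  have key : g v + ⟪b, u - v⟫ - L⁻¹ * ⟪b, a - b⟫ ≤
      g u - L⁻¹ * ⟪a, a - b⟫ + L / 2 * (L⁻¹ ^ 2 * ‖a - b‖ ^ 2) := by linarith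
  have hLL : L / 2 * (L⁻¹ ^ 2 * ‖a - b‖ ^ 2) = L⁻¹ / 2 * ‖a - b‖ ^ 2 := by
    field_simp
  rw [hLL] at key
  have : L⁻¹ * ‖a - b‖ ^ 2 - L⁻¹ / 2 * ‖a - b‖ ^ 2 ≤ g u - g v - ⟪b, u - v⟫ := by
    nlinarith [e4]
  have h5 : L⁻¹ / 2 * ‖a - b‖ ^ 2 ≤ g u - g v - ⟪b, u - v⟫ := by linarith
  calc ‖a - b‖ ^ 2 = 2 * L * (L⁻¹ / 2 * ‖a - b‖ ^ 2) := by field_simp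
  _ ≤ 2 * L * (g u - g v - ⟪b, u - v⟫) := by
      have : (0:ℝ) < 2 * L := by linarith
      exact mul_le_mul_of_nonneg_left h5 (le_of_lt this)

lemma s2gd_PL {μ : ℝ} (hμ : 0 < μ) (g : E → ℝ) (Gg : E → E)
    (hstrong : ∀ x z : E, g x + ⟪Gg x, z - x⟫ + μ / 2 * ‖z - x‖ ^ 2 ≤ g z)
    (xstar : E) (x : E) :
    2 * μ * (g x - g xstar) ≤ ‖Gg x‖ ^ 2 := by
  have h1 := hstrong x xstar
  have h2 : ⟪Gg x, xstar - x⟫ ≥ -(‖Gg x‖ * ‖xstar - x‖) := by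
    have := abs_real_inner_le_norm (Gg x) (xstar - x)
    have := abs_le.mp this
    linarith [this.1]
  have h3 : g x - ‖Gg x‖ * ‖xstar - x‖ + μ / 2 * ‖xstar - x‖ ^ 2 ≤ g xstar := by linarith
  nlinarith [sq_nonneg (μ * ‖xstar - x‖ - ‖Gg x‖)]

lemma s2gd_qgrowth {μ : ℝ} (hμ : 0 < μ) (g : E → ℝ) (Gg : E → E)
    (hstrong : ∀ x z : E, g x + ⟪Gg x, z - x⟫ + μ / 2 * ‖z - x‖ ^ 2 ≤ g z)
    (xstar : E) (hstar : Gg xstar = 0) (x : E) :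
    ‖x - xstar‖ ^ 2 ≤ 2 / μ * (g x - g xstar) := by
  have h1 := hstrong xstar x
  rw [hstar] at h1
  simp at h1
  have : μ / 2 * ‖x - xstar‖ ^ 2 ≤ g x - g xstar := by linarith
  rw [div_mul_eq_mul_div, le_div_iff₀ hμ]
  nlinarith

lemma s2gd_onestep {n : ℕ} (hn : 0 < n) (f : Fin n → E → ℝ)
    {L μ ν h : ℝ} (hL : 0 < L) (hμ : 0 < μ) (hμL : μ ≤ L)
    (hν0 : 0 ≤ ν) (hνμ : ν ≤ μ) (hh0 : 0 < h)
    (hconv : ∀ i, ∀ x z : E, f i x + ⟪gradient (f i) x, z - x⟫ ≤ f i z)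
    (hsmooth : ∀ i, ∀ x z : E,
      f i z ≤ f i x + ⟪gradient (f i) x, z - x⟫ + L / 2 * ‖z - x‖ ^ 2)
    (favg : E → ℝ) (hfavg : ∀ z, ∑ i, f i z = (n : ℝ) * favg z)
    (gA : E → E) (hgA : ∀ z, (∑ i, gradient (f i) z) = (n : ℝ) • gA z)
    (hstrong : ∀ x z : E, favg x + ⟪gA x, z - x⟫ + μ / 2 * ‖z - x‖ ^ 2 ≤ favg z)
    (xstar : E) (hstar : gA xstar = 0)
    (y x : E) :
    (n : ℝ)⁻¹ * ∑ i, ‖y - h • (gA x + gradient (f i) y - gradient (f i) x) - xstar‖ ^ 2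
      ≤ (1 - ν * h) * ‖y - xstar‖ ^ 2
        - 2 * h * (1 - 2 * L * h) * (favg y - favg xstar)
        + 4 * (L - μ) * h ^ 2 * (favg x - favg xstar) := by
  have hnpos : (0:ℝ) < (n:ℝ) := by exact_mod_cast hn
  set G : Fin n → E := fun i => gA x + gradient (f i) y - gradient (f i) x with hG
  set a : E := y - xstar with haa
  have hre : ∀ i, y - h • G i - xstar = a - h • G i := by intro i; rw [haa]; abel
  have hsumG : ∑ i, G i = (n : ℝ) • gA y := by
    rw [hG]
    simp only [Finset.sum_sub_distrib, Finset.sum_add_distrib, Finset.sum_const,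
      Finset.card_univ, Fintype.card_fin, hgA]
    simp [← Nat.cast_smul_eq_nsmul ℝ]
  -- variance bound
  have hvar : ∑ i, ‖G i‖ ^ 2 ≤ 4 * L * (n : ℝ) * (favg y - favg xstar)
      + 4 * (L - μ) * (n : ℝ) * (favg x - favg xstar) := by
    set A : Fin n → E := fun i => gradient (f i) y - gradient (f i) xstar with hA
    set D : Fin n → E := fun i => gradient (f i) x - gradient (f i) xstar with hD
    set C : E := gA x with hC
    have hGi : ∀ i, G i = A i + (C - D i) := by intro i; simp only [hG, hA, hD, hC]; abel
    have h1 : ∀ i, ‖G i‖ ^ 2 ≤ 2 * ‖A i‖ ^ 2 + 2 * ‖C - D i‖ ^ 2 := by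
      intro i; rw [hGi i]; exact s2gd_two_sq _ _
    have hsumA : ∑ i, ‖A i‖ ^ 2 ≤ 2 * L * ((n:ℝ) * favg y - (n:ℝ) * favg xstar) := by
      have step : ∀ i, ‖A i‖ ^ 2 ≤
          2 * L * (f i y - f i xstar - ⟪gradient (f i) xstar, y - xstar⟫) := by
        intro i; exact s2gd_lemA hL (f i) (gradient (f i)) (hconv i) (hsmooth i) y xstar
      calc ∑ i, ‖A i‖ ^ 2
          ≤ ∑ i, 2 * L * (f i y - f i xstar - ⟪gradient (f i) xstar, y - xstar⟫) :=
            Finset.sum_le_sum fun i _ => step i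
        _ = 2 * L * ((n:ℝ) * favg y - (n:ℝ) * favg xstar) := by
            rw [← Finset.mul_sum]
            congr 1
            rw [Finset.sum_sub_distrib, Finset.sum_sub_distrib, hfavg, hfavg,
              ← sum_inner, hgA, hstar]
            simp
    have hsumD : ∑ i, ‖D i‖ ^ 2 ≤ 2 * L * ((n:ℝ) * favg x - (n:ℝ) * favg xstar) := by
      have step : ∀ i, ‖D i‖ ^ 2 ≤
          2 * L * (f i x - f i xstar - ⟪gradient (f i) xstar, x - xstar⟫) := by
        intro i; exact s2gd_lemA hL (f i) (gradient (f i)) (hconv i) (hsmooth i) x xstar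
      calc ∑ i, ‖D i‖ ^ 2
          ≤ ∑ i, 2 * L * (f i x - f i xstar - ⟪gradient (f i) xstar, x - xstar⟫) :=
            Finset.sum_le_sum fun i _ => step i
        _ = 2 * L * ((n:ℝ) * favg x - (n:ℝ) * favg xstar) := by
            rw [← Finset.mul_sum]
            congr 1
            rw [Finset.sum_sub_distrib, Finset.sum_sub_distrib, hfavg, hfavg,
              ← sum_inner, hgA, hstar]
            simp
    have hsumDC : ∑ i, D i = (n:ℝ) • C := by
      rw [hD, hC]
      simp only [Finset.sum_sub_distrib, hgA, hstar]
      simp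
    have hB : ∑ i, ‖C - D i‖ ^ 2 = ∑ i, ‖D i‖ ^ 2 - (n:ℝ) * ‖C‖ ^ 2 := by
      have expand : ∀ i, ‖C - D i‖ ^ 2 = ‖C‖ ^ 2 - 2 * ⟪C, D i⟫ + ‖D i‖ ^ 2 := by
        intro i; exact norm_sub_sq_real C (D i)
      rw [Finset.sum_congr rfl fun i _ => expand i]
      rw [Finset.sum_add_distrib, Finset.sum_sub_distrib, Finset.sum_const,
        Finset.card_univ, Fintype.card_fin, ← Finset.mul_sum, ← inner_sum, hsumDC,
        real_inner_smul_right, real_inner_self_eq_norm_sq]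
      simp [nsmul_eq_mul]
      ring
    have hPL : 2 * μ * (favg x - favg xstar) ≤ ‖C‖ ^ 2 :=
      s2gd_PL hμ favg gA hstrong xstar x
    calc ∑ i, ‖G i‖ ^ 2 ≤ ∑ i, (2 * ‖A i‖ ^ 2 + 2 * ‖C - D i‖ ^ 2) :=
          Finset.sum_le_sum fun i _ => h1 i
      _ = 2 * ∑ i, ‖A i‖ ^ 2 + 2 * ∑ i, ‖C - D i‖ ^ 2 := by
          rw [Finset.sum_add_distrib, ← Finset.mul_sum, ← Finset.mul_sum]
      _ ≤ 4 * L * (n : ℝ) * (favg y - favg xstar)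
          + 4 * (L - μ) * (n : ℝ) * (favg x - favg xstar) := by
          rw [hB]
          nlinarith [hPL, hnpos]
  -- main expansion
  have hsum : ∑ i, ‖y - h • G i - xstar‖ ^ 2
      = (n:ℝ) * ‖a‖ ^ 2 - 2 * h * ((n:ℝ) * ⟪gA y, a⟫) + h ^ 2 * ∑ i, ‖G i‖ ^ 2 := by
    rw [Finset.sum_congr rfl fun i _ => by rw [hre i, s2gd_expand]]
    rw [Finset.sum_add_distrib, Finset.sum_sub_distrib, Finset.sum_const,
      Finset.card_univ, Fintype.card_fin, ← Finset.mul_sum, ← Finset.mul_sum,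
      ← sum_inner, hsumG, real_inner_smul_left]
    simp [nsmul_eq_mul]
  have hsc : favg y - favg xstar + μ / 2 * ‖a‖ ^ 2 ≤ ⟪gA y, a⟫ := by
    have h1 := hstrong y xstar
    have e1 : ⟪gA y, xstar - y⟫ = -⟪gA y, a⟫ := by
      rw [haa, ← inner_neg_right]; congr 1; abel
    have e2 : ‖xstar - y‖ = ‖a‖ := by rw [haa, norm_sub_rev]
    rw [e1, e2] at h1
    linarith
  have hyge : 0 ≤ favg y - favg xstar := by
    have h1 := hstrong xstar y
    rw [hstar] at h1
    simp at h1
    nlinarith [sq_nonneg ‖y - xstar‖]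
  rw [hsum]
  have key : (n:ℝ)⁻¹ * ((n:ℝ) * ‖a‖ ^ 2 - 2 * h * ((n:ℝ) * ⟪gA y, a⟫) + h ^ 2 * ∑ i, ‖G i‖ ^ 2)
      = ‖a‖ ^ 2 - 2 * h * ⟪gA y, a⟫ + h ^ 2 * ((n:ℝ)⁻¹ * ∑ i, ‖G i‖ ^ 2) := by
    field_simp
  rw [key]
  have hvar' : (n:ℝ)⁻¹ * ∑ i, ‖G i‖ ^ 2 ≤ 4 * L * (favg y - favg xstar)
      + 4 * (L - μ) * (favg x - favg xstar) := by
    rw [inv_mul_le_iff₀ hnpos]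
    calc ∑ i, ‖G i‖ ^ 2 ≤ 4 * L * (n : ℝ) * (favg y - favg xstar)
        + 4 * (L - μ) * (n : ℝ) * (favg x - favg xstar) := hvar
      _ = (n:ℝ) * (4 * L * (favg y - favg xstar) + 4 * (L - μ) * (favg x - favg xstar)) := by ring
  have hnn : 0 ≤ ‖a‖ ^ 2 := sq_nonneg _
  nlinarith [mul_le_mul_of_nonneg_left hvar' (le_of_lt (pow_pos hh0 2)),
    mul_le_mul_of_nonneg_left hsc (by linarith : (0:ℝ) ≤ 2 * h),
    mul_nonneg (mul_nonneg (sub_nonneg.mpr hνμ) hh0.le) hnn]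
end OneStep

section GradAux
variable {E : Type*} [NormedAddCommGroup E] [InnerProductSpace ℝ E] [CompleteSpace E]
lemma s2gd_grad_avg {n : ℕ} (f : Fin n → E → ℝ) (hdiff : ∀ i, Differentiable ℝ (f i))
    (favg : E → ℝ) (hfavg : favg = fun x => (1/(n:ℝ)) * ∑ i, f i x) (z : E) :
    gradient favg z = (n:ℝ)⁻¹ • ∑ i, gradient (f i) z := by
  have hd : ∀ i, DifferentiableAt ℝ (f i) z := fun i => (hdiff i).differentiableAt
  have hsum : DifferentiableAt ℝ (fun x => ∑ i, f i x) z :=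
    DifferentiableAt.fun_sum (fun i _ => hd i)
  have h1 : fderiv ℝ favg z = (1/(n:ℝ)) • fderiv ℝ (fun x => ∑ i, f i x) z := by
    rw [hfavg]; exact fderiv_const_mul hsum _
  have h2 : fderiv ℝ (fun x => ∑ i, f i x) z = ∑ i, fderiv ℝ (f i) z :=
    fderiv_fun_sum (fun i _ => hd i)
  show (InnerProductSpace.toDual ℝ E).symm (fderiv ℝ favg z) = _
  rw [h1, h2, _root_.map_smul, map_sum, one_div]
  rfl

lemma s2gd_gsum {n : ℕ} (hn : 0 < n) (f : Fin n → E → ℝ)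
    (hdiff : ∀ i, Differentiable ℝ (f i))
    (favg : E → ℝ) (hfavg : favg = fun x => (1/(n:ℝ)) * ∑ i, f i x) (z : E) :
    (∑ i, gradient (f i) z) = (n:ℝ) • gradient favg z := by
  rw [s2gd_grad_avg f hdiff favg hfavg z, smul_smul]
  have : (n:ℝ) ≠ 0 := Nat.cast_ne_zero.mpr hn.ne'
  rw [mul_inv_cancel₀ this, one_smul]

lemma s2gd_fsum {n : ℕ} (hn : 0 < n) (f : Fin n → E → ℝ)
    (favg : E → ℝ) (hfavg : favg = fun x => (1/(n:ℝ)) * ∑ i, f i x) (z : E) :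
    ∑ i, f i z = (n:ℝ) * favg z := by
  rw [hfavg]
  have : (n:ℝ) ≠ 0 := Nat.cast_ne_zero.mpr hn.ne'
  field_simp

lemma s2gd_favg_smooth {n : ℕ} (hn : 0 < n) (f : Fin n → E → ℝ) {L : ℝ} (hL : 0 < L)
    (hdiff : ∀ i, Differentiable ℝ (f i))
    (hsmooth : ∀ i, ∀ x z : E,
      f i z ≤ f i x + ⟪gradient (f i) x, z - x⟫ + L / 2 * ‖z - x‖ ^ 2)
    (favg : E → ℝ) (hfavg : favg = fun x => (1/(n:ℝ)) * ∑ i, f i x) (x z : E) :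
    favg z ≤ favg x + ⟪gradient favg x, z - x⟫ + L / 2 * ‖z - x‖ ^ 2 := by
  have hnpos : (0:ℝ) < (n:ℝ) := by exact_mod_cast hn
  have h1 : ∑ i, f i z ≤ ∑ i, (f i x + ⟪gradient (f i) x, z - x⟫ + L / 2 * ‖z - x‖ ^ 2) :=
    Finset.sum_le_sum fun i _ => hsmooth i x z
  rw [Finset.sum_add_distrib, Finset.sum_add_distrib, ← sum_inner,
    s2gd_gsum hn f hdiff favg hfavg, s2gd_fsum hn f favg hfavg,
    s2gd_fsum hn f favg hfavg, Finset.sum_const, Finset.card_univ, Fintype.card_fin,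
    real_inner_smul_left] at h1
  have h2 : (n:ℝ) * favg z ≤ (n:ℝ) * (favg x + ⟪gradient favg x, z - x⟫ + L / 2 * ‖z - x‖ ^ 2) := by
    rw [mul_add, mul_add]
    simpa [nsmul_eq_mul] using h1
  exact le_of_mul_le_mul_left (by linarith [h2]) hnpos

lemma s2gd_grad_min_zero {n : ℕ} (hn : 0 < n) (f : Fin n → E → ℝ) {L : ℝ} (hL : 0 < L)
    (hdiff : ∀ i, Differentiable ℝ (f i))
    (hsmooth : ∀ i, ∀ x z : E,
      f i z ≤ f i x + ⟪gradient (f i) x, z - x⟫ + L / 2 * ‖z - x‖ ^ 2)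
    (favg : E → ℝ) (hfavg : favg = fun x => (1/(n:ℝ)) * ∑ i, f i x)
    (xstar : E) (hmin : ∀ z : E, favg xstar ≤ favg z) :
    gradient favg xstar = 0 := by
  set g := gradient favg xstar with hg
  have h1 := s2gd_favg_smooth hn f hL hdiff hsmooth favg hfavg xstar (xstar - L⁻¹ • g)
  have h2 := hmin (xstar - L⁻¹ • g)
  have e0 : xstar - L⁻¹ • g - xstar = -(L⁻¹ • g) := by abel
  rw [e0, inner_neg_right, real_inner_smul_right, real_inner_self_eq_norm_sq,
    norm_neg, norm_smul, mul_pow] at h1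
  have hLpos : (0:ℝ) < L⁻¹ := by positivity
  have e1 : ‖L⁻¹‖ ^ 2 = L⁻¹ ^ 2 := by rw [Real.norm_eq_abs, sq_abs]
  rw [e1] at h1
  have key : L / 2 * (L⁻¹ ^ 2 * ‖g‖ ^ 2) = L⁻¹ / 2 * ‖g‖ ^ 2 := by
    field_simp
  rw [key] at h1
  have : L⁻¹ * ‖g‖ ^ 2 ≤ L⁻¹ / 2 * ‖g‖ ^ 2 := by linarith
  have hz : ‖g‖ ^ 2 ≤ 0 := by nlinarith
  have : ‖g‖ = 0 := by nlinarith [sq_nonneg ‖g‖, norm_nonneg g]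
  exact norm_eq_zero.mp this

end GradAux

section RecAux
variable {E : Type*} [NormedAddCommGroup E] [InnerProductSpace ℝ E] [CompleteSpace E]
noncomputable def s2gdStep {n : ℕ} (f : Fin n → E → ℝ) (favg : E → ℝ) (h : ℝ)
    (u : ℕ → Fin n) (p : E) : ℕ → E
  | 0 => p
  | (t+1) => s2gdStep f favg h u p t -
      h • (gradient favg p + gradient (f (u t)) (s2gdStep f favg h u p t) -
        gradient (f (u t)) p)

noncomputable def s2gdEpoch {n : ℕ} (f : Fin n → E → ℝ) (favg : E → ℝ) (h : ℝ)
    (x0 : E) (us : ℕ → ℕ → Fin n) (ts : ℕ → ℕ) : ℕ → E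
  | 0 => x0
  | (j+1) => s2gdStep f favg h (us j) (s2gdEpoch f favg h x0 us ts j) (ts j - 1)

lemma s2gdStep_congr {n : ℕ} (f : Fin n → E → ℝ) (favg : E → ℝ) (h : ℝ)
    {u u' : ℕ → Fin n} (p : E) (t : ℕ) (hu : ∀ t' < t, u t' = u' t') :
    s2gdStep f favg h u p t = s2gdStep f favg h u' p t := by
  induction t with
  | zero => rfl
  | succ t ih =>
    have h1 := ih (fun t' ht' => hu t' (Nat.lt_succ_of_lt ht'))
    simp only [s2gdStep, h1, hu t (Nat.lt_succ_self t)]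

lemma s2gdEpoch_congr {n : ℕ} (f : Fin n → E → ℝ) (favg : E → ℝ) (h : ℝ) (x0 : E) (m : ℕ)
    {us us' : ℕ → ℕ → Fin n} {ts ts' : ℕ → ℕ} (j : ℕ)
    (hts : ∀ j' < j, ts j' = ts' j') (htsm : ∀ j' < j, ts j' ≤ m)
    (hus : ∀ j' < j, ∀ t' < m, us j' t' = us' j' t') :
    s2gdEpoch f favg h x0 us ts j = s2gdEpoch f favg h x0 us' ts' j := by
  induction j with
  | zero => rfl
  | succ j ih =>
    have h1 := ih (fun j' hj' => hts j' (Nat.lt_succ_of_lt hj'))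
      (fun j' hj' => htsm j' (Nat.lt_succ_of_lt hj'))
      (fun j' hj' => hus j' (Nat.lt_succ_of_lt hj'))
    simp only [s2gdEpoch, h1, hts j (Nat.lt_succ_self j)]
    apply s2gdStep_congr
    intro t' ht'
    apply hus j (Nat.lt_succ_self j)
    have := hts j (Nat.lt_succ_self j)
    have := htsm j (Nat.lt_succ_self j)
    omega

lemma s2gd_Icc_sum (m : ℕ) (g : ℕ → ℝ) :
    ∑ t ∈ Finset.Icc 1 m, g t = ∑ i ∈ Finset.range m, g (i+1) := by
  induction m with
  | zero => simp
  | succ m ih => rw [Finset.sum_range_succ, ← ih, Finset.sum_Icc_succ_top (by omega)]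

lemma s2gd_telescope (m : ℕ) (r d K : ℝ) (hr : 0 ≤ r) (hd : 0 ≤ d) (A B : ℕ → ℝ)
    (hrec : ∀ t < m, A (t+1) ≤ r * A t - d * B t + K * B 0) :
    ∀ s, s ≤ m → A s + d * ∑ t ∈ Finset.range s, r ^ (s-1-t) * B t ≤
      r ^ s * A 0 + K * (∑ t ∈ Finset.range s, r ^ t) * B 0 := by
  intro s
  induction s with
  | zero => simp
  | succ s ih =>
    intro hsm
    have hs : s < m := lt_of_lt_of_le (Nat.lt_succ_self s) hsm
    have ih' := ih (le_of_lt hs)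
    have hsplit : ∑ t ∈ Finset.range (s+1), r ^ (s+1-1-t) * B t
        = r * ∑ t ∈ Finset.range s, r ^ (s-1-t) * B t + B s := by
      rw [Finset.sum_range_succ]
      have e1 : (s+1-1-s : ℕ) = 0 := by omega
      rw [e1, pow_zero, one_mul, Finset.mul_sum]
      congr 1
      apply Finset.sum_congr rfl
      intro t ht
      have ht' : t < s := Finset.mem_range.mp ht
      have e2 : (s+1-1-t : ℕ) = (s-1-t) + 1 := by omega
      rw [e2, pow_succ]
      ring
    rw [hsplit]
    have hgeom : (∑ t ∈ Finset.range (s+1), r ^ t) = r * (∑ t ∈ Finset.range s, r ^ t) + 1 :=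
      geom_sum_succ
    have hrec' := hrec s hs
    have hmul := mul_le_mul_of_nonneg_left ih' hr
    calc A (s+1) + d * (r * ∑ t ∈ Finset.range s, r ^ (s-1-t) * B t + B s)
        ≤ (r * A s - d * B s + K * B 0) + d * (r * ∑ t ∈ Finset.range s, r ^ (s-1-t) * B t + B s)
          := add_le_add_left hrec' _
      _ = r * (A s + d * ∑ t ∈ Finset.range s, r ^ (s-1-t) * B t) + K * B 0 := by ring
      _ ≤ r * (r ^ s * A 0 + K * (∑ t ∈ Finset.range s, r ^ t) * B 0) + K * B 0 := by
          linarith [hmul]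
      _ = r ^ (s+1) * A 0 + K * (∑ t ∈ Finset.range (s+1), r ^ t) * B 0 := by
          rw [hgeom]; ring

lemma s2gd_integrable_of_finite_range {Ω : Type*} [MeasurableSpace Ω] (P : Measure Ω)
    [IsFiniteMeasure P] (g : Ω → ℝ) (hm : Measurable g) (hf : (Set.range g).Finite) :
    Integrable g P := by
  have hb : ∃ C, ∀ ω, ‖g ω‖ ≤ C := by
    have h2 : ((fun r : ℝ => ‖r‖) '' Set.range g).Finite := hf.image _
    obtain ⟨C, hC⟩ := h2.bddAbove
    exact ⟨C, fun ω => hC ⟨g ω, Set.mem_range_self ω, rfl⟩⟩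
  obtain ⟨C, hC⟩ := hb
  exact ⟨hm.aestronglyMeasurable, HasFiniteIntegral.of_bounded (C := C) (Filter.Eventually.of_forall hC)⟩

end RecAux

/-- Theorem 4 of the S2GD paper: linear convergence in expectation of S2GD.
If `c = (1 − νh)^m/(β μ h (1 − 2Lh)) + 2(L − μ)h/(1 − 2Lh) < 1`, then for every epoch `j`,
`E[f(x_j) − f(x*)] ≤ c^j (f(x_0) − f(x*))`. -/
theorem s2gd_convergence_in_expectation
    {E : Type*} [NormedAddCommGroup E] [InnerProductSpace ℝ E] [CompleteSpace E]
    {n : ℕ} (hn : 0 < n) (f : Fin n → E → ℝ) {L μ : ℝ} (hL : 0 < L)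
    (hμpos : 0 < μ) (hμL : μ ≤ L)
    (hdiff : ∀ i, Differentiable ℝ (f i))
    (hconv : ∀ i, ∀ x z : E, f i x + ⟪gradient (f i) x, z - x⟫ ≤ f i z)
    (hsmooth : ∀ i, ∀ x z : E,
      f i z ≤ f i x + ⟪gradient (f i) x, z - x⟫ + L / 2 * ‖z - x‖ ^ 2)
    (favg : E → ℝ) (hfavg : favg = fun x => (1 / (n : ℝ)) * ∑ i, f i x)
    (hstrong : ∀ x z : E,
      favg x + ⟪gradient favg x, z - x⟫ + μ / 2 * ‖z - x‖ ^ 2 ≤ favg z)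
    (xstar : E) (hmin : ∀ z : E, favg xstar ≤ favg z)
    -- parameters of the method
    {ν h : ℝ} (hν0 : 0 ≤ ν) (hνμ : ν ≤ μ) (hh0 : 0 < h) (hh : h < 1 / (2 * L))
    {m : ℕ} (hm : 1 ≤ m)
    {β : ℝ} (hβ : β = ∑ t ∈ Finset.Icc 1 m, (1 - ν * h) ^ (m - t))
    {c : ℝ}
    (hc : c = (1 - ν * h) ^ m / (β * μ * h * (1 - 2 * L * h)) +
        2 * (L - μ) * h / (1 - 2 * L * h))
    (hc1 : c < 1)
    -- the underlying probability space and the randomness of the method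
    {Ω : Type*} [MeasurableSpace Ω] (P : Measure Ω) [IsProbabilityMeasure P]
    (idx : ℕ → ℕ → Ω → Fin n) (hidxmeas : ∀ j t, Measurable (idx j t))
    (hidxunif : ∀ j t (i : Fin n), P {ω | idx j t ω = i} = (n : ENNReal)⁻¹)
    (τ : ℕ → Ω → ℕ) (hτmeas : ∀ j, Measurable (τ j))
    (hτrange : ∀ j ω, τ j ω ∈ Finset.Icc 1 m)
    (hτdist : ∀ j, ∀ t ∈ Finset.Icc 1 m,
      P {ω | τ j ω = t} = ENNReal.ofReal ((1 - ν * h) ^ (m - t) / β))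
    -- all the random indices and epoch lengths are mutually independent
    (hindep : iIndepFun (m := fun _ : ℕ ⊕ (ℕ × ℕ) => (inferInstance : MeasurableSpace ℕ))
      (Sum.elim (fun j => fun ω => τ j ω)
        (fun p => fun ω => ((idx p.1 p.2 ω : Fin n) : ℕ))) P)
    -- the iterates of the method
    (x0 : E) (x : ℕ → Ω → E) (y : ℕ → ℕ → Ω → E)
    (hx0 : ∀ ω, x 0 ω = x0)
    (hy0 : ∀ j ω, y j 0 ω = x j ω)
    (hyrec : ∀ j t ω, t < m →
      y j (t + 1) ω = y j t ω -
        h • (gradient favg (x j ω) + gradient (f (idx j t ω)) (y j t ω) -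
          gradient (f (idx j t ω)) (x j ω)))
    (hxrec : ∀ j ω, x (j + 1) ω = y j (τ j ω - 1) ω) :
    ∀ j : ℕ, ∫ ω, (favg (x j ω) - favg xstar) ∂P ≤ c ^ j * (favg x0 - favg xstar) := by
  classical
  -- basic positivity facts
  have hnR : (0:ℝ) < (n:ℝ) := by exact_mod_cast hn
  have h2L : 0 < 1 - 2*L*h := by
    have h2L0 : (0:ℝ) < 2*L := by linarith
    have : 2*L*h < 1 := by
      calc 2*L*h < 2*L*(1/(2*L)) := by exact mul_lt_mul_of_pos_left hh h2L0
        _ = 1 := by field_simp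
    linarith
  set r : ℝ := 1 - ν*h with hr
  have hr0 : 0 < r := by
    have h1 : ν * h ≤ L * h := by nlinarith
    rw [hr]; nlinarith
  have hr0' : 0 ≤ r := le_of_lt hr0
  set d : ℝ := 2*h*(1-2*L*h) with hd
  have hdpos : 0 < d := by rw [hd]; positivity
  set K : ℝ := 4*(L-μ)*h^2 with hK
  have hK0 : 0 ≤ K := by rw [hK]; nlinarith
  have hIcc : ∀ g : ℕ → ℝ, ∑ t ∈ Finset.Icc 1 m, g t = ∑ i ∈ Finset.range m, g (i+1) :=
    fun g => s2gd_Icc_sum m g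
  have hβr : β = ∑ t ∈ Finset.range m, r ^ t := by
    rw [hβ, hIcc]
    have hrefl := Finset.sum_range_reflect (fun i => r ^ i) m
    rw [← hrefl]
    apply Finset.sum_congr rfl
    intro i hi
    congr 1
    omega
  have hβpos : 0 < β := by
    rw [hβr]
    apply Finset.sum_pos (fun t _ => pow_pos hr0 t)
    exact ⟨0, Finset.mem_range.mpr (by omega)⟩
  have hc0 : 0 ≤ c := by
    rw [hc]
    have h1 : 0 ≤ r ^ m / (β * μ * h * (1 - 2 * L * h)) := by
      apply div_nonneg (pow_nonneg hr0' m)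
      positivity
    have h2 : 0 ≤ 2 * (L - μ) * h / (1 - 2 * L * h) := by
      apply div_nonneg (by nlinarith) (le_of_lt h2L)
    linarith
  -- gradient facts
  have hgA : ∀ z, (∑ i, gradient (f i) z) = (n:ℝ) • gradient favg z :=
    s2gd_gsum hn f hdiff favg hfavg
  have hfsum : ∀ z, ∑ i, f i z = (n:ℝ) * favg z := s2gd_fsum hn f favg hfavg
  have hstar : gradient favg xstar = 0 :=
    s2gd_grad_min_zero hn f hL hdiff hsmooth favg hfavg xstar hmin
  have hfge : ∀ z, 0 ≤ favg z - favg xstar := fun z => sub_nonneg.mpr (hmin z)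
  -- infrastructure for randomness
  set F : (ℕ ⊕ ℕ × ℕ) → Ω → ℕ := Sum.elim (fun j => fun ω => τ j ω)
    (fun p => fun ω => ((idx p.1 p.2 ω : Fin n) : ℕ)) with hF
  have hFmeas : ∀ i, Measurable (F i) := by
    rintro (j' | p)
    · exact hτmeas j'
    · exact (measurable_of_countable (Fin.val)).comp (hidxmeas p.1 p.2)
  set Z : (S : Finset (ℕ ⊕ ℕ × ℕ)) → Ω → (S → ℕ) := fun S ω i => F i.1 ω with hZ
  have hZmeas : ∀ S, Measurable (Z S) := fun S => measurable_pi_lambda _ fun i => hFmeas i.1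
  have hτle : ∀ j ω, 1 ≤ τ j ω ∧ τ j ω ≤ m := by
    intro j ω; have := hτrange j ω; simp only [Finset.mem_Icc] at this; exact this
  have hZfin : ∀ S : Finset (ℕ ⊕ ℕ × ℕ), (Set.range (Z S)).Finite := by
    intro S
    apply Set.Finite.subset (Set.Finite.pi (fun i : S => Set.finite_Iic (n + m)))
    rintro _ ⟨ω, rfl⟩
    rw [Set.mem_pi]
    intro i _
    rcases i with ⟨(j' | p), hi⟩
    · simp only [hZ, hF, Set.mem_Iic, Sum.elim_inl]
      have := (hτle j' ω).2; omega
    · simp only [hZ, hF, Set.mem_Iic, Sum.elim_inr]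
      have := (idx p.1 p.2 ω).isLt; omega
  have hintZ : ∀ (S : Finset (ℕ ⊕ ℕ × ℕ)) (ψ : (S → ℕ) → ℝ),
      Integrable (fun ω => ψ (Z S ω)) P := by
    intro S ψ
    apply s2gd_integrable_of_finite_range P _ ((measurable_of_countable ψ).comp (hZmeas S))
    apply Set.Finite.subset ((hZfin S).image ψ)
    rintro _ ⟨ω, rfl⟩
    exact ⟨Z S ω, ⟨ω, rfl⟩, rfl⟩
  have hindZ : ∀ S S' : Finset (ℕ ⊕ ℕ × ℕ), Disjoint S S' → IndepFun (Z S) (Z S') P :=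
    fun S S' hdisj => hindep.indepFun_finset S S' hdisj hFmeas
  -- the coordinate sets
  set T : ℕ → ℕ → Finset (ℕ ⊕ ℕ × ℕ) := fun j t =>
    ((Finset.range j).image Sum.inl ∪ (Finset.range j ×ˢ Finset.range m).image Sum.inr) ∪
      (Finset.range t).image (fun t' => Sum.inr (j, t')) with hT
  have hTl : ∀ j t j', j' < j → Sum.inl j' ∈ T j t := by
    intro j t j' hj'
    exact Finset.mem_union_left _ (Finset.mem_union_left _
      (Finset.mem_image_of_mem _ (Finset.mem_range.mpr hj')))
  have hTr1 : ∀ j t j' t', j' < j → t' < m → Sum.inr (j', t') ∈ T j t := by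
    intro j t j' t' hj' ht'
    exact Finset.mem_union_left _ (Finset.mem_union_right _
      (Finset.mem_image_of_mem _ (Finset.mem_product.mpr
        ⟨Finset.mem_range.mpr hj', Finset.mem_range.mpr ht'⟩)))
  have hTr2 : ∀ j t t', t' < t → Sum.inr (j, t') ∈ T j t := by
    intro j t t' ht'
    exact Finset.mem_union_right _ (Finset.mem_image_of_mem _ (Finset.mem_range.mpr ht'))
  have hTnotr : ∀ j t, Sum.inr (j, t) ∉ T j t := by
    intro j t hmem
    simp only [hT, Finset.mem_union, Finset.mem_image, Finset.mem_product,
      Finset.mem_range] at hmem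
    rcases hmem with ((⟨a, ha, hEq⟩ | ⟨p, ⟨hp1, hp2⟩, hEq⟩) | ⟨a, ha, hEq⟩)
    · exact absurd hEq (by simp)
    · rw [Sum.inr.injEq] at hEq
      rw [hEq] at hp1
      omega
    · rw [Sum.inr.injEq, Prod.mk.injEq] at hEq
      omega
  have hTnotl : ∀ j t, Sum.inl j ∉ T j t := by
    intro j t hmem
    simp only [hT, Finset.mem_union, Finset.mem_image, Finset.mem_product,
      Finset.mem_range] at hmem
    rcases hmem with ((⟨a, ha, hEq⟩ | ⟨p, _, hEq⟩) | ⟨a, ha, hEq⟩)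
    · rw [Sum.inl.injEq] at hEq; omega
    · exact absurd hEq (by simp)
    · exact absurd hEq (by simp)
  -- representation through the deterministic recursion
  have hyrep : ∀ j t, t ≤ m → ∀ ω,
      y j t ω = s2gdStep f favg h (fun t' => idx j t' ω) (x j ω) t := by
    intro j t
    induction t with
    | zero => intro _ ω; rw [hy0]; rfl
    | succ t ih =>
      intro ht ω
      rw [hyrec j t ω (by omega), ih (by omega) ω]
      simp [s2gdStep]
  have hxrep : ∀ j ω, x j ω =
      s2gdEpoch f favg h x0 (fun j' t' => idx j' t' ω) (fun j' => τ j' ω) j := by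
    intro j
    induction j with
    | zero => intro ω; rw [hx0]; rfl
    | succ j ih =>
      intro ω
      rw [hxrec j ω, hyrep j (τ j ω - 1) (by have := hτle j ω; omega) ω, ih ω]
      simp [s2gdEpoch]
  -- factorization of (x j, y j t) through the coordinates in T j t
  have hfac : ∀ j t, t ≤ m → ∃ G : (↥(T j t) → ℕ) → E × E,
      ∀ ω, G (Z (T j t) ω) = (x j ω, y j t ω) := by
    intro j t htm
    set usv : (↥(T j t) → ℕ) → ℕ → ℕ → Fin n := fun v j' t' =>
      if hmem : Sum.inr (j', t') ∈ T j t then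
        ⟨v ⟨Sum.inr (j', t'), hmem⟩ % n, Nat.mod_lt _ hn⟩ else ⟨0, hn⟩ with husv
    set tsv : (↥(T j t) → ℕ) → ℕ → ℕ := fun v j' =>
      if hmem : Sum.inl j' ∈ T j t then v ⟨Sum.inl j', hmem⟩ else 1 with htsv
    refine ⟨fun v => (s2gdEpoch f favg h x0 (usv v) (tsv v) j,
      s2gdStep f favg h (usv v j) (s2gdEpoch f favg h x0 (usv v) (tsv v) j) t), ?_⟩
    intro ω
    have hus : ∀ j' t', Sum.inr (j', t') ∈ T j t →
        usv (Z (T j t) ω) j' t' = idx j' t' ω := by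
      intro j' t' hmem
      rw [husv]
      simp only [dif_pos hmem]
      apply Fin.ext
      simp only [hZ, hF, Sum.elim_inr]
      exact Nat.mod_eq_of_lt (idx j' t' ω).isLt
    have hts : ∀ j', Sum.inl j' ∈ T j t → tsv (Z (T j t) ω) j' = τ j' ω := by
      intro j' hmem
      rw [htsv]
      simp only [dif_pos hmem, hZ, hF, Sum.elim_inl]
    have hx' : s2gdEpoch f favg h x0 (usv (Z (T j t) ω)) (tsv (Z (T j t) ω)) j = x j ω := by
      rw [hxrep j ω]
      apply s2gdEpoch_congr f favg h x0 m j
      · intro j' hj'; exact hts j' (hTl j t j' hj')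
      · intro j' hj'
        rw [hts j' (hTl j t j' hj')]
        exact (hτle j' ω).2
      · intro j' hj' t' ht'; exact hus j' t' (hTr1 j t j' t' hj' ht')
    have hy' : s2gdStep f favg h (usv (Z (T j t) ω) j)
        (s2gdEpoch f favg h x0 (usv (Z (T j t) ω)) (tsv (Z (T j t) ω)) j) t = y j t ω := by
      rw [hx', hyrep j t htm ω]
      apply s2gdStep_congr
      intro t' ht'
      exact hus j t' (hTr2 j t t' ht')
    rw [Prod.mk.injEq]
    exact ⟨hx', hy'⟩
  have hIntComp : ∀ j t, t ≤ m → ∀ Φ : E × E → ℝ,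
      Integrable (fun ω => Φ (x j ω, y j t ω)) P := by
    intro j t htm Φ
    obtain ⟨G, hG⟩ := hfac j t htm
    have he : (fun ω => Φ (x j ω, y j t ω)) = fun ω => Φ (G (Z (T j t) ω)) := by
      funext ω; rw [hG ω]
    rw [he]
    exact hintZ (T j t) (fun v => Φ (G v))
  -- expected quantities
  set Aq : ℕ → ℕ → ℝ := fun j t => ∫ ω, ‖y j t ω - xstar‖^2 ∂P with hAq
  set Bq : ℕ → ℕ → ℝ := fun j t => ∫ ω, (favg (y j t ω) - favg xstar) ∂P with hBq
  have hBnonneg : ∀ j t, 0 ≤ Bq j t := fun j t => integral_nonneg fun ω => hfge _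
  have hAnonneg : ∀ j t, 0 ≤ Aq j t := fun j t => integral_nonneg fun ω => sq_nonneg _
  have hDB : ∀ j, ∫ ω, (favg (x j ω) - favg xstar) ∂P = Bq j 0 := by
    intro j
    simp only [hBq]
    have he : (fun ω => favg (y j 0 ω) - favg xstar) = fun ω => favg (x j ω) - favg xstar := by
      funext ω; rw [hy0]
    rw [he]
  -- the one-step inequality in expectation
  have hstep : ∀ j t, t < m → Aq j (t+1) ≤ r * Aq j t - d * Bq j t + K * Bq j 0 := by
    intro j t htm
    obtain ⟨G, hG⟩ := hfac j t (le_of_lt htm)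
    set Q : Fin n → Ω → ℝ := fun i ω => ‖y j t ω - h • (gradient favg (x j ω) +
      gradient (f i) (y j t ω) - gradient (f i) (x j ω)) - xstar‖^2 with hQ
    set ind : Fin n → Ω → ℝ := fun i ω => if idx j t ω = i then 1 else 0 with hind
    have hpt : ∀ ω, ‖y j (t+1) ω - xstar‖^2 = ∑ i, ind i ω * Q i ω := by
      intro ω
      have h1 : ∑ i, ind i ω * Q i ω = Q (idx j t ω) ω := by
        simp only [hind, ite_mul, one_mul, zero_mul]
        rw [Finset.sum_ite_eq]
        simp
      rw [h1]
      simp only [hQ]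
      rw [hyrec j t ω htm]
    have hQint : ∀ i, Integrable (Q i) P := by
      intro i
      have := hIntComp j t (le_of_lt htm) (fun p => ‖p.2 - h • (gradient favg p.1 +
        gradient (f i) p.2 - gradient (f i) p.1) - xstar‖^2)
      simpa only [hQ] using this
    have hindmeas : ∀ i : Fin n, Measurable (ind i) := by
      intro i
      have he : ind i = (fun i' : Fin n => if i' = i then (1:ℝ) else 0) ∘ (idx j t) := rfl
      rw [he]
      exact (measurable_of_countable _).comp (hidxmeas j t)
    have hprodint : ∀ i, Integrable (fun ω => ind i ω * Q i ω) P := by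
      intro i
      apply (hQint i).bdd_mul (c := 1) (hindmeas i).aestronglyMeasurable
      refine Filter.Eventually.of_forall (fun ω => ?_)
      simp only [hind]
      split <;> simp
    have hdisj : Disjoint ({Sum.inr (j,t)} : Finset (ℕ ⊕ ℕ × ℕ)) (T j t) :=
      Finset.disjoint_singleton_left.mpr (hTnotr j t)
    have hkey : ∀ i, ∫ ω, ind i ω * Q i ω ∂P = (n:ℝ)⁻¹ * ∫ ω, Q i ω ∂P := by
      intro i
      have hbase := hindZ {Sum.inr (j,t)} (T j t) hdisj
      set κ : (↥({Sum.inr (j,t)} : Finset (ℕ ⊕ ℕ × ℕ)) → ℕ) → ℝ := fun v =>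
        if v ⟨Sum.inr (j,t), Finset.mem_singleton_self _⟩ = (i:ℕ) then 1 else 0 with hκ
      set ψ : (↥(T j t) → ℕ) → ℝ := fun v =>
        ‖(G v).2 - h • (gradient favg (G v).1 + gradient (f i) (G v).2 -
          gradient (f i) (G v).1) - xstar‖^2 with hψ
      have e1 : ind i = κ ∘ Z {Sum.inr (j,t)} := by
        funext ω
        simp only [hind, hκ, Function.comp, hZ, hF, Sum.elim_inr, Fin.val_inj]
      have e2 : Q i = ψ ∘ Z (T j t) := by
        funext ω
        simp only [hQ, hψ, Function.comp]
        rw [hG ω]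
      have hIF : IndepFun (ind i) (Q i) P := by
        rw [e1, e2]
        exact hbase.comp (measurable_of_countable κ) (measurable_of_countable ψ)
      have hindint : Integrable (ind i) P := by
        apply s2gd_integrable_of_finite_range P _ (hindmeas i)
        apply Set.Finite.subset ((Set.finite_singleton (1:ℝ)).insert 0)
        rintro _ ⟨ω, rfl⟩
        simp only [hind]
        split <;> simp
      have hmul := IndepFun.integral_mul_eq_mul_integral hIF hindint.aestronglyMeasurable (hQint i).aestronglyMeasurable
      have hindval : ∫ ω, ind i ω ∂P = (n:ℝ)⁻¹ := by
        have hs : MeasurableSet {ω | idx j t ω = i} := by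
          have hset : {ω | idx j t ω = i} = (idx j t) ⁻¹' {i} := by ext ω; simp
          rw [hset]
          exact hidxmeas j t (measurableSet_singleton i)
        have he : ind i = Set.indicator {ω | idx j t ω = i} (1 : Ω → ℝ) := by
          funext ω
          simp only [hind, Set.indicator_apply, Set.mem_setOf_eq, Pi.one_apply]
        rw [he, integral_indicator_one hs, measureReal_def, hidxunif j t i, ENNReal.toReal_inv]
        simp
      have hee : (fun ω => ind i ω * Q i ω) = (ind i * Q i : Ω → ℝ) := rfl
      rw [hee, hmul, hindval]
    have hsum1 : Aq j (t+1) = (n:ℝ)⁻¹ * ∑ i, ∫ ω, Q i ω ∂P := by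
      simp only [hAq]
      rw [show (fun ω => ‖y j (t+1) ω - xstar‖^2) = fun ω => ∑ i, ind i ω * Q i ω from
        funext hpt]
      rw [integral_finset_sum _ (fun i _ => hprodint i)]
      rw [Finset.sum_congr rfl (fun i _ => hkey i), ← Finset.mul_sum]
    have hub : ∀ ω, (n:ℝ)⁻¹ * ∑ i, Q i ω ≤ r * ‖y j t ω - xstar‖^2
        - d * (favg (y j t ω) - favg xstar) + K * (favg (x j ω) - favg xstar) := by
      intro ω
      have hone := s2gd_onestep hn f hL hμpos hμL hν0 hνμ hh0 hconv hsmooth favg hfsum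
        (gradient favg) hgA hstrong xstar hstar (y j t ω) (x j ω)
      rw [hr, hd, hK]
      simpa only [hQ] using hone
    have hLint : Integrable (fun ω => (n:ℝ)⁻¹ * ∑ i, Q i ω) P := by
      have := hIntComp j t (le_of_lt htm) (fun p => (n:ℝ)⁻¹ * ∑ i, ‖p.2 - h •
        (gradient favg p.1 + gradient (f i) p.2 - gradient (f i) p.1) - xstar‖^2)
      simpa only [hQ] using this
    have hRint : Integrable (fun ω => r * ‖y j t ω - xstar‖^2
        - d * (favg (y j t ω) - favg xstar) + K * (favg (x j ω) - favg xstar)) P :=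
      hIntComp j t (le_of_lt htm) (fun p => r * ‖p.2 - xstar‖^2
        - d * (favg p.2 - favg xstar) + K * (favg p.1 - favg xstar))
    have hmono : ∫ ω, ((n:ℝ)⁻¹ * ∑ i, Q i ω) ∂P ≤ ∫ ω, (r * ‖y j t ω - xstar‖^2
        - d * (favg (y j t ω) - favg xstar) + K * (favg (x j ω) - favg xstar)) ∂P :=
      integral_mono hLint hRint hub
    have hint1 : Integrable (fun ω => r * ‖y j t ω - xstar‖^2) P :=
      hIntComp j t (le_of_lt htm) (fun p => r * ‖p.2 - xstar‖^2)
    have hint2 : Integrable (fun ω => d * (favg (y j t ω) - favg xstar)) P :=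
      hIntComp j t (le_of_lt htm) (fun p => d * (favg p.2 - favg xstar))
    have hint3 : Integrable (fun ω => K * (favg (x j ω) - favg xstar)) P :=
      hIntComp j t (le_of_lt htm) (fun p => K * (favg p.1 - favg xstar))
    have hRval : ∫ ω, (r * ‖y j t ω - xstar‖^2 - d * (favg (y j t ω) - favg xstar)
        + K * (favg (x j ω) - favg xstar)) ∂P = r * Aq j t - d * Bq j t + K * Bq j 0 := by
      have hint12 : Integrable (fun ω => r * ‖y j t ω - xstar‖^2
          - d * (favg (y j t ω) - favg xstar)) P :=
        hIntComp j t (le_of_lt htm) (fun p => r * ‖p.2 - xstar‖^2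
          - d * (favg p.2 - favg xstar))
      rw [integral_add hint12 hint3, integral_sub hint1 hint2,
        integral_const_mul, integral_const_mul, integral_const_mul, hDB j]
    have hLeq : ∫ ω, ((n:ℝ)⁻¹ * ∑ i, Q i ω) ∂P = (n:ℝ)⁻¹ * ∑ i, ∫ ω, Q i ω ∂P := by
      rw [integral_const_mul, integral_finset_sum _ (fun i _ => hQint i)]
    rw [hsum1, ← hRval, ← hLeq]
    exact hmono
  -- the epoch inequality in expectation
  have hepoch : ∀ j, Bq (j+1) 0 ≤ c * Bq j 0 := by
    intro j
    set R : ℕ → Ω → ℝ := fun t ω => favg (y j (t-1) ω) - favg xstar with hR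
    set indτ : ℕ → Ω → ℝ := fun t ω => if τ j ω = t then 1 else 0 with hindτ
    have hpt : ∀ ω, favg (x (j+1) ω) - favg xstar
        = ∑ t ∈ Finset.Icc 1 m, indτ t ω * R t ω := by
      intro ω
      have h1 : ∑ t ∈ Finset.Icc 1 m, indτ t ω * R t ω = R (τ j ω) ω := by
        simp only [hindτ, ite_mul, one_mul, zero_mul]
        rw [Finset.sum_ite_eq]
        rw [if_pos (hτrange j ω)]
      rw [h1]
      simp only [hR]
      rw [hxrec j ω]
    have hRint : ∀ t, t ∈ Finset.Icc 1 m → Integrable (R t) P := by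
      intro t ht
      simp only [Finset.mem_Icc] at ht
      have := hIntComp j (t-1) (by omega) (fun p => favg p.2 - favg xstar)
      simpa only [hR] using this
    have hindτmeas : ∀ t, Measurable (indτ t) := by
      intro t
      have he : indτ t = (fun s : ℕ => if s = t then (1:ℝ) else 0) ∘ (τ j) := rfl
      rw [he]
      exact (measurable_of_countable _).comp (hτmeas j)
    have hprodint : ∀ t ∈ Finset.Icc 1 m, Integrable (fun ω => indτ t ω * R t ω) P := by
      intro t ht
      apply (hRint t ht).bdd_mul (c := 1) (hindτmeas t).aestronglyMeasurable
      refine Filter.Eventually.of_forall (fun ω => ?_)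
      simp only [hindτ]
      split <;> simp
    have hkey : ∀ t, t ∈ Finset.Icc 1 m →
        ∫ ω, indτ t ω * R t ω ∂P = (r^(m-t)/β) * ∫ ω, R t ω ∂P := by
      intro t ht
      have htm' : t - 1 ≤ m := by simp only [Finset.mem_Icc] at ht; omega
      obtain ⟨G, hG⟩ := hfac j (t-1) htm'
      have hdisj : Disjoint ({Sum.inl j} : Finset (ℕ ⊕ ℕ × ℕ)) (T j (t-1)) :=
        Finset.disjoint_singleton_left.mpr (hTnotl j (t-1))
      have hbase := hindZ {Sum.inl j} (T j (t-1)) hdisj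
      set κ : (↥({Sum.inl j} : Finset (ℕ ⊕ ℕ × ℕ)) → ℕ) → ℝ := fun v =>
        if v ⟨Sum.inl j, Finset.mem_singleton_self _⟩ = t then 1 else 0 with hκ
      set ψ : (↥(T j (t-1)) → ℕ) → ℝ := fun v =>
        favg (G v).2 - favg xstar with hψ
      have e1 : indτ t = κ ∘ Z {Sum.inl j} := by
        funext ω
        simp only [hindτ, hκ, Function.comp, hZ, hF, Sum.elim_inl]
        rfl
      have e2 : R t = ψ ∘ Z (T j (t-1)) := by
        funext ω
        simp only [hR, hψ, Function.comp]
        rw [hG ω]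
      have hIF : IndepFun (indτ t) (R t) P := by
        rw [e1, e2]
        exact hbase.comp (measurable_of_countable κ) (measurable_of_countable ψ)
      have hindint : Integrable (indτ t) P := by
        apply s2gd_integrable_of_finite_range P _ (hindτmeas t)
        apply Set.Finite.subset ((Set.finite_singleton (1:ℝ)).insert 0)
        rintro _ ⟨ω, rfl⟩
        simp only [hindτ]
        split <;> simp
      have hmul := IndepFun.integral_mul_eq_mul_integral hIF hindint.aestronglyMeasurable (hRint t ht).aestronglyMeasurable
      have hval : ∫ ω, indτ t ω ∂P = r^(m-t)/β := by
        have hs : MeasurableSet {ω | τ j ω = t} := by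
          have hset : {ω | τ j ω = t} = (τ j) ⁻¹' {t} := by ext ω; simp
          rw [hset]
          exact hτmeas j (measurableSet_singleton t)
        have he : indτ t = Set.indicator {ω | τ j ω = t} (1 : Ω → ℝ) := by
          funext ω
          simp only [hindτ, Set.indicator_apply, Set.mem_setOf_eq, Pi.one_apply]
        rw [he, integral_indicator_one hs, measureReal_def, hτdist j t ht, ENNReal.toReal_ofReal]
        exact div_nonneg (pow_nonneg hr0' _) (le_of_lt hβpos)
      have hee : (fun ω => indτ t ω * R t ω) = (indτ t * R t : Ω → ℝ) := rfl
      rw [hee, hmul, hval]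
    have hsumB : Bq (j+1) 0 = ∑ t ∈ Finset.Icc 1 m, (r^(m-t)/β) * Bq j (t-1) := by
      rw [← hDB (j+1)]
      rw [show (fun ω => favg (x (j+1) ω) - favg xstar)
        = fun ω => ∑ t ∈ Finset.Icc 1 m, indτ t ω * R t ω from funext hpt]
      rw [integral_finset_sum _ hprodint]
      apply Finset.sum_congr rfl
      intro t ht
      rw [hkey t ht]
    have htel := s2gd_telescope m r d K hr0' (le_of_lt hdpos) (fun t => Aq j t)
      (fun t => Bq j t) (fun t ht => hstep j t ht) m le_rfl
    have hA0 : Aq j 0 ≤ 2/μ * Bq j 0 := by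
      have hq : ∀ ω, ‖y j 0 ω - xstar‖^2 ≤ 2/μ * (favg (y j 0 ω) - favg xstar) := fun ω =>
        s2gd_qgrowth hμpos favg (gradient favg) hstrong xstar hstar (y j 0 ω)
      have hqi1 : Integrable (fun ω => ‖y j 0 ω - xstar‖^2) P :=
        hIntComp j 0 (by omega) (fun p => ‖p.2 - xstar‖^2)
      have hqi2 : Integrable (fun ω => 2/μ * (favg (y j 0 ω) - favg xstar)) P :=
        hIntComp j 0 (by omega) (fun p => 2/μ * (favg p.2 - favg xstar))
      have h1 : Aq j 0 ≤ ∫ ω, 2/μ * (favg (y j 0 ω) - favg xstar) ∂P := by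
        simp only [hAq]
        exact integral_mono hqi1 hqi2 hq
      rw [integral_const_mul] at h1
      simpa only [hBq] using h1
    set S := ∑ t ∈ Finset.range m, r ^ (m-1-t) * Bq j t with hS
    have htel' : Aq j m + d * S ≤ r^m * Aq j 0 + K * β * Bq j 0 := by
      rw [hβr]
      have := htel
      simpa only [hS] using this
    have hdS : d * S ≤ r^m * (2/μ * Bq j 0) + K * β * Bq j 0 := by
      have h1 := mul_le_mul_of_nonneg_left hA0 (pow_nonneg hr0' m)
      linarith [hAnonneg j m]
    have hre : Bq (j+1) 0 = β⁻¹ * S := by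
      rw [hsumB, hIcc (fun t => (r^(m-t)/β) * Bq j (t-1)), hS, Finset.mul_sum]
      apply Finset.sum_congr rfl
      intro i hi
      simp only [Nat.add_sub_cancel]
      have hme : m - (i+1) = m - 1 - i := by omega
      rw [hme]
      ring
    have hβne : β ≠ 0 := ne_of_gt hβpos
    have hμne : μ ≠ 0 := ne_of_gt hμpos
    have hhne : h ≠ 0 := ne_of_gt hh0
    have h2Lne : (1 - 2*L*h) ≠ 0 := ne_of_gt h2L
    have hcβ : c = (r^m * (2/μ) + K * β) / (β * d) := by
      rw [hc, hd, hK]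
      field_simp
      ring
    rw [hre, hcβ, div_mul_eq_mul_div, le_div_iff₀ (by positivity : (0:ℝ) < β * d)]
    have heq : β⁻¹ * S * (β * d) = S * d := by
      field_simp
    rw [heq]
    have he2 : (r ^ m * (2 / μ) + K * β) * Bq j 0
        = r ^ m * (2 / μ * Bq j 0) + K * β * Bq j 0 := by ring
    rw [he2, mul_comm S d]
    exact hdS
  -- conclude by induction on epochs
  have main : ∀ j, Bq j 0 ≤ c^j * (favg x0 - favg xstar) := by
    intro j
    induction j with
    | zero =>
      rw [pow_zero, one_mul, ← hDB 0]
      have he : (fun ω => favg (x 0 ω) - favg xstar) = fun _ => favg x0 - favg xstar := by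
        funext ω; rw [hx0]
      rw [he, integral_const]
      simp
    | succ j ih =>
      calc Bq (j+1) 0 ≤ c * Bq j 0 := hepoch j
        _ ≤ c * (c^j * (favg x0 - favg xstar)) := mul_le_mul_of_nonneg_left ih hc0
        _ = c^(j+1) * (favg x0 - favg xstar) := by ring
  intro j
  rw [hDB j]
  exact main j
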